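/- arXiv:1506.03927 — 6 statements merged into one kernel-verified Lean document; each statement's English description precedes it below -/
import Mathlib

section
/- For a finite set I partitioned into disjoint nonempty sets A, B and C = I \ (A ∪ B), and a : I → ℝ, one has max_{i∈A∪C} a_i + max_{i∈B∪C} a_i − max_{i∈I} a_i − max_{i∈C} a_i = [min(max_{i∈A} a_i, max_{i∈B} a_i) − max_{j∈C} a_j]_+, where [z]_+ = max(z,0) and max over the empty set is taken to be 0 (assume a_i ≥ 0), provided C is nonempty; if C is empty the left side (with max_∅ = 0 and a_i ≥ 0) equals min(max_{i∈A} a_i, max_{i∈B} a_i). -/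
open Finset

/-- Maximum of a nonnegative function over a finite set, with the convention that the
maximum over the empty set is `0`. -/
noncomputable def fmax {ι : Type*} (S : Finset ι) (a : ι → ℝ) : ℝ := S.fold max 0 a

lemma fmax_nonneg {ι : Type*} (S : Finset ι) (a : ι → ℝ) : 0 ≤ fmax S a := by
  classical
  induction S using Finset.induction with
  | empty => simp [fmax]
  | insert _ _ h ih => simp only [fmax, Finset.fold_insert_idem] at *; exact le_max_of_le_right ih

lemma fmax_insert {ι : Type*} [DecidableEq ι] (i : ι) (S : Finset ι) (a : ι → ℝ) :
    fmax (insert i S) a = max (a i) (fmax S a) := by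
  simp [fmax, Finset.fold_insert_idem]

lemma fmax_union {ι : Type*} [DecidableEq ι] (S T : Finset ι) (a : ι → ℝ) :
    fmax (S ∪ T) a = max (fmax S a) (fmax T a) := by
  induction S using Finset.induction with
  | empty => simp [fmax, show max 0 (Finset.fold max 0 a T) = Finset.fold max 0 a T from max_eq_right (fmax_nonneg T a)]
  | insert _ _ h ih =>
      rw [Finset.insert_union, fmax_insert, fmax_insert, ih, max_assoc]

/-- For a finite set `I` partitioned into disjoint nonempty `A`, `B` and `C = I \ (A ∪ B)`,
and nonnegative `a : ι → ℝ`,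
`max_{A∪C} a + max_{B∪C} a − max_I a − max_C a = [min(max_A a, max_B a) − max_C a]_+`,
with the convention that the maximum over the empty set is `0` (this single identity covers
both the case `C ≠ ∅` and the case `C = ∅`, where it reads
`max_A a + max_B a − max_I a = min(max_A a, max_B a)`). -/
theorem max_identity_three_blocks {ι : Type*} [DecidableEq ι]
    (I A B : Finset ι) (hA : A.Nonempty) (hB : B.Nonempty)
    (hAB : Disjoint A B) (hAI : A ⊆ I) (hBI : B ⊆ I)
    (C : Finset ι) (hC : C = I \ (A ∪ B))
    (a : ι → ℝ) (ha : ∀ i, 0 ≤ a i) :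
    fmax (A ∪ C) a + fmax (B ∪ C) a - fmax I a - fmax C a
      = max (min (fmax A a) (fmax B a) - fmax C a) 0 := by
  have hI : I = (A ∪ B) ∪ C := by
    rw [hC, Finset.union_sdiff_of_subset (Finset.union_subset hAI hBI)]
  rw [hI, fmax_union, fmax_union, fmax_union, fmax_union]
  set x := fmax A a; set y := fmax B a; set z := fmax C a
  rcases le_total x y with h1 | h1 <;> rcases le_total x z with h2 | h2 <;>
    rcases le_total y z with h3 | h3 <;>
    simp [max_def, min_def, h1, h2, h3] <;> split_ifs <;> linarith
end

section
/- For a simple max-stable random vector X = (X_i)_{i∈I} with exponent function V, the subvectors X_A and X_B (for disjoint nonempty A, B ⊆ I) are independent if and only if V^A(x_A) + V^B(x_B) = V^{A∪B}(x_{A∪B}) for all x ∈ (0,∞)^{A∪B}, i.e. if and only if χ_{A,B} ≡ 0. -/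
open Finset MeasureTheory ProbabilityTheory

lemma fmax_congr {ι : Type*} {S : Finset ι} {a b : ι → ℝ} (h : ∀ i ∈ S, a i = b i) :
    fmax S a = fmax S b := Finset.fold_congr h

lemma fmax_singleton {ι : Type*} (i : ι) (a : ι → ℝ) :
    fmax {i} a = max (a i) 0 := by simp [fmax]

/-- Trace σ-algebra argument: for any Borel set `S` of the subvector space, the preimage of
`S ∩ {positive orthant}` under the subvector map lies in the σ-algebra generated by the
"positive rectangle" events. -/
lemma aux_mem_generateFrom {Ω ι : Type*} [MeasurableSpace Ω] [Fintype ι] [DecidableEq ι]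
    (X : Ω → ι → ℝ) (J : Finset ι)
    (S : Set (↥J → ℝ)) (hS : MeasurableSet S) :
    MeasurableSet[MeasurableSpace.generateFrom
      {s | ∃ x : ι → ℝ, (∀ i, 0 < x i) ∧ s = {ω | ∀ i ∈ J, X ω i ≤ x i}}]
      ((fun ω => fun i : J => X ω i) ⁻¹' (S ∩ {y : ↥J → ℝ | ∀ i, 0 < y i})) := by
  classical
  set p : Set (Set Ω) :=
    {s | ∃ x : ι → ℝ, (∀ i, 0 < x i) ∧ s = {ω | ∀ i ∈ J, X ω i ≤ x i}} with hp
  set m1 : MeasurableSpace Ω := MeasurableSpace.generateFrom p with hm1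
  set f : Ω → (↥J → ℝ) := fun ω => fun i : J => X ω i with hfdef
  set O : Set (↥J → ℝ) := {y : ↥J → ℝ | ∀ i, 0 < y i} with hO
  -- Step 1: single-coordinate events with positive threshold are in m1
  have step1 : ∀ i ∈ J, ∀ c : ℝ, 0 < c → MeasurableSet[m1] {ω | X ω i ≤ c} := by
    intro i hi c hc
    have hset : {ω | X ω i ≤ c}
        = ⋃ n : ℕ, {ω | ∀ j ∈ J, X ω j ≤ (fun j => if j = i then c else (n : ℝ) + 1) j} := by
      ext ω
      simp only [Set.mem_setOf_eq, Set.mem_iUnion]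
      constructor
      · intro h
        obtain ⟨M, hM⟩ := (J.image fun j => X ω j).exists_le
        obtain ⟨n, hn⟩ := exists_nat_ge M
        refine ⟨n, fun j hj => ?_⟩
        by_cases hji : j = i
        · simpa [hji] using h
        · simp only [hji, if_false]
          exact le_trans (hM _ (Finset.mem_image_of_mem _ hj)) (le_trans hn (by linarith))
      · rintro ⟨n, hn⟩
        simpa using hn i hi
    rw [hset]
    refine MeasurableSet.iUnion fun n => MeasurableSpace.measurableSet_generateFrom ?_
    refine ⟨fun j => if j = i then c else (n : ℝ) + 1, fun j => ?_, rfl⟩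
    by_cases hji : j = i <;> simp [hji, hc] <;> positivity
  -- Step 2: the preimage of the positive orthant is in m1
  have step2 : MeasurableSet[m1] (f ⁻¹' O) := by
    have hset : f ⁻¹' O = ⋂ i ∈ (J : Set ι), (⋂ n : ℕ, {ω | X ω i ≤ ((n : ℝ) + 1)⁻¹})ᶜ := by
      ext ω
      simp only [Set.mem_preimage, hO, Set.mem_setOf_eq, Set.mem_iInter, Set.mem_compl_iff,
        Finset.mem_coe, hfdef]
      constructor
      · intro h i hi hcon
        obtain ⟨n, hn⟩ := exists_nat_gt (X ω i)⁻¹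
        have h1 : 0 < X ω i := h ⟨i, hi⟩
        have h2 := hcon n
        have h3 : ((n : ℝ) + 1)⁻¹ < X ω i := by
          rw [inv_lt_comm₀ (by positivity) h1]
          calc (X ω i)⁻¹ < n := hn
            _ < n + 1 := by linarith
        exact absurd h2 (not_le.mpr h3)
      · intro h i
        by_contra hcon
        push_neg at hcon
        refine h i i.2 fun n => le_trans hcon (by positivity)
    rw [hset]
    exact MeasurableSet.biInter J.countable_toSet fun i hi =>
      (MeasurableSet.iInter fun n => step1 i hi _ (by positivity)).compl
  -- Step 3: trace σ-algebra
  let mT : MeasurableSpace (↥J → ℝ) :=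
    { MeasurableSet' := fun T => MeasurableSet[m1] (f ⁻¹' (T ∩ O))
      measurableSet_empty := by simp
      measurableSet_compl := fun T hT => by
        have hT' : MeasurableSet[m1] (f ⁻¹' (T ∩ O)) := hT
        show MeasurableSet[m1] (f ⁻¹' (Tᶜ ∩ O))
        have h : f ⁻¹' (Tᶜ ∩ O) = f ⁻¹' O \ f ⁻¹' (T ∩ O) := by
          ext ω; simp only [Set.mem_preimage, Set.mem_inter_iff, Set.mem_compl_iff,
            Set.mem_diff]; tauto
        rw [h]; exact step2.diff hT'
      measurableSet_iUnion := fun s hs => by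
        have hs' : ∀ n, MeasurableSet[m1] (f ⁻¹' (s n ∩ O)) := hs
        show MeasurableSet[m1] (f ⁻¹' ((⋃ n, s n) ∩ O))
        have h : f ⁻¹' ((⋃ n, s n) ∩ O) = ⋃ n, f ⁻¹' (s n ∩ O) := by
          rw [Set.iUnion_inter, Set.preimage_iUnion]
        rw [h]; exact MeasurableSet.iUnion hs' }
  have hle : (MeasurableSpace.pi : MeasurableSpace (↥J → ℝ)) ≤ mT := by
    have heval : ∀ i : ↥J, @Measurable _ _ mT _ (fun y : ↥J → ℝ => y i) := by
      intro i
      refine measurable_of_Iic (mδ := mT) ?_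
      intro c
      show MeasurableSet[m1] (f ⁻¹' (((fun y : ↥J → ℝ => y i) ⁻¹' Set.Iic c) ∩ O))
      rcases le_or_gt c 0 with hc | hc
      · have h : ((fun y : ↥J → ℝ => y i) ⁻¹' Set.Iic c) ∩ O = ∅ := by
          ext y
          simp only [Set.mem_inter_iff, Set.mem_preimage, Set.mem_Iic, hO, Set.mem_setOf_eq,
            Set.mem_empty_iff_false, iff_false, not_and]
          intro h1 h2
          exact absurd (h2 i) (not_lt.mpr (h1.trans hc))
        rw [h]; simp
      · have h : f ⁻¹' (((fun y : ↥J → ℝ => y i) ⁻¹' Set.Iic c) ∩ O)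
            = {ω | X ω (i : ι) ≤ c} ∩ f ⁻¹' O := by
          ext ω
          simp only [Set.mem_preimage, Set.mem_inter_iff, Set.mem_Iic, Set.mem_setOf_eq, hfdef]
        rw [h]
        exact (step1 i i.2 c hc).inter step2
    rw [MeasurableSpace.pi]
    exact iSup_le fun i => (@measurable_iff_comap_le _ _ mT _ _).mp (heval i)
  exact hle S hS

/-- For a simple max-stable random vector `X` with exponent functions
`V^J(x) = ∫ max_{i∈J} ω_i/x_i dH` (i.e. `P(X_J ≤ x_J) = exp(−V^J(x_J))` for a spectral
measure `H` with unit moments), the subvectors `X_A` and `X_B` (disjoint nonempty `A, B`)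
are independent if and only if `V^A(x_A) + V^B(x_B) = V^{A∪B}(x_{A∪B})` for all `x > 0`. -/
theorem maxStable_indep_iff_additive {Ω : Type*} [MeasurableSpace Ω]
    (μ : Measure Ω) [IsProbabilityMeasure μ]
    {ι : Type*} [Fintype ι] [DecidableEq ι] [Nonempty ι]
    (X : Ω → ι → ℝ) (hXm : ∀ i, Measurable fun ω => X ω i)
    (H : Measure (ι → ℝ)) [IsFiniteMeasure H]
    (hpos : ∀ᵐ ω ∂H, ∀ i, 0 ≤ ω i)
    (hint : ∀ i, Integrable (fun ω => ω i) H)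
    (hmom : ∀ i, (∫ ω, ω i ∂H) = 1)
    (hdist : ∀ (J : Finset ι), J.Nonempty → ∀ x : ι → ℝ, (∀ i, 0 < x i) →
      μ {ω | ∀ i ∈ J, X ω i ≤ x i}
        = ENNReal.ofReal (Real.exp (-(∫ ω', fmax J (fun i => ω' i / x i) ∂H))))
    (A B : Finset ι) (hA : A.Nonempty) (hB : B.Nonempty) (hAB : Disjoint A B) :
    IndepFun (fun ω => fun i : A => X ω i) (fun ω => fun i : B => X ω i) μ
      ↔ ∀ x : ι → ℝ, (∀ i, 0 < x i) →
          (∫ ω', fmax A (fun i => ω' i / x i) ∂H) + (∫ ω', fmax B (fun i => ω' i / x i) ∂H)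
            = ∫ ω', fmax (A ∪ B) (fun i => ω' i / x i) ∂H := by
  classical
  set f : Ω → (↥A → ℝ) := fun ω => fun i : A => X ω i with hfdef
  set g : Ω → (↥B → ℝ) := fun ω => fun i : B => X ω i with hgdef
  -- measurability of rectangle events
  have hE : ∀ (J : Finset ι) (x : ι → ℝ), MeasurableSet {ω | ∀ i ∈ J, X ω i ≤ x i} := by
    intro J x
    have h : {ω | ∀ i ∈ J, X ω i ≤ x i} = ⋂ i ∈ (J : Set ι), {ω | X ω i ≤ x i} := by
      ext ω; simp
    rw [h]
    exact MeasurableSet.biInter J.countable_toSet fun i _ =>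
      measurableSet_le (hXm i) measurable_const
  -- marginal null sets
  have hnull : ∀ i : ι, μ {ω | X ω i ≤ 0} = 0 := by
    intro i
    have hb : ∀ n : ℕ, μ {ω | X ω i ≤ 0} ≤ ENNReal.ofReal (Real.exp (-((n : ℝ) + 1))) := by
      intro n
      have hxpos : ∀ j, 0 < (fun _ : ι => ((n : ℝ) + 1)⁻¹) j := fun j => by positivity
      have h1 := hdist {i} (Finset.singleton_nonempty i) _ hxpos
      have h2 : (∫ ω', fmax {i} (fun j => ω' j / ((n : ℝ) + 1)⁻¹) ∂H) = (n : ℝ) + 1 := by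
        have hae : (fun ω' : ι → ℝ => fmax {i} fun j => ω' j / ((n : ℝ) + 1)⁻¹)
            =ᵐ[H] fun ω' => ω' i * ((n : ℝ) + 1) := by
          filter_upwards [hpos] with ω hω
          rw [fmax_singleton, max_eq_left (div_nonneg (hω i) (by positivity)), div_eq_mul_inv, inv_inv]
        rw [integral_congr_ae hae, integral_mul_const, hmom i, one_mul]
      rw [h2] at h1
      calc μ {ω | X ω i ≤ 0}
          ≤ μ {ω | ∀ j ∈ ({i} : Finset ι), X ω j ≤ ((n : ℝ) + 1)⁻¹} := by
            apply measure_mono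
            intro ω hω j hj
            rw [Finset.mem_singleton] at hj
            subst hj
            exact le_trans hω (by positivity)
        _ = _ := h1
    have htend : Filter.Tendsto (fun n : ℕ => ENNReal.ofReal (Real.exp (-((n : ℝ) + 1))))
        Filter.atTop (nhds 0) := by
      rw [← ENNReal.ofReal_zero]
      apply ENNReal.tendsto_ofReal
      apply Real.tendsto_exp_atBot.comp
      apply Filter.tendsto_neg_atBot_iff.mpr
      exact Filter.tendsto_atTop_add_const_right _ 1 tendsto_natCast_atTop_atTop
    exact le_antisymm (ge_of_tendsto' htend hb) zero_le
  have hNnull : ∀ J : Finset ι, μ (⋃ i ∈ (J : Set ι), {ω | X ω i ≤ 0}) = 0 := fun J =>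
    (measure_biUnion_null_iff J.countable_toSet).mpr fun i _ => hnull i
  constructor
  · -- independence → additivity
    intro hind x hx
    have hs : MeasurableSet (Set.univ.pi fun i : ↥A => Set.Iic (x i)) :=
      MeasurableSet.univ_pi fun i => measurableSet_Iic
    have ht : MeasurableSet (Set.univ.pi fun i : ↥B => Set.Iic (x i)) :=
      MeasurableSet.univ_pi fun i => measurableSet_Iic
    have h := hind.measure_inter_preimage_eq_mul _ _ hs ht
    have hfs : f ⁻¹' (Set.univ.pi fun i : ↥A => Set.Iic (x i))
        = {ω | ∀ i ∈ A, X ω i ≤ x i} := by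
      ext ω; simp [Set.mem_pi, Pi.le_def, Subtype.forall, hfdef]
    have hgs : g ⁻¹' (Set.univ.pi fun i : ↥B => Set.Iic (x i))
        = {ω | ∀ i ∈ B, X ω i ≤ x i} := by
      ext ω; simp [Set.mem_pi, Pi.le_def, Subtype.forall, hgdef]
    have hun : {ω | ∀ i ∈ A, X ω i ≤ x i} ∩ {ω | ∀ i ∈ B, X ω i ≤ x i}
        = {ω | ∀ i ∈ A ∪ B, X ω i ≤ x i} := by
      ext ω
      simp only [Set.mem_inter_iff, Set.mem_setOf_eq, Finset.mem_union]
      constructor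
      · rintro ⟨h1, h2⟩ i hi
        rcases hi with hi | hi
        · exact h1 i hi
        · exact h2 i hi
      · intro h1
        exact ⟨fun i hi => h1 i (Or.inl hi), fun i hi => h1 i (Or.inr hi)⟩
    rw [hfs, hgs, hun] at h
    rw [hdist (A ∪ B) hA.inl x hx, hdist A hA x hx, hdist B hB x hx,
      ← ENNReal.ofReal_mul (Real.exp_nonneg _), ← Real.exp_add, ← neg_add] at h
    have := (ENNReal.ofReal_eq_ofReal_iff (Real.exp_nonneg _) (Real.exp_nonneg _)).mp h
    have := Real.exp_injective this
    linarith
  · -- additivity → independence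
    intro hadd
    -- product formula on positive rectangles
    have key : ∀ x y : ι → ℝ, (∀ i, 0 < x i) → (∀ i, 0 < y i) →
        μ ({ω | ∀ i ∈ A, X ω i ≤ x i} ∩ {ω | ∀ i ∈ B, X ω i ≤ y i})
          = μ {ω | ∀ i ∈ A, X ω i ≤ x i} * μ {ω | ∀ i ∈ B, X ω i ≤ y i} := by
      intro x y hx hy
      set z : ι → ℝ := fun i => if i ∈ A then x i else y i with hz
      have hzpos : ∀ i, 0 < z i := fun i => by
        by_cases h : i ∈ A <;> simp [hz, h, hx i, hy i]
      have hzA : ∀ i ∈ A, z i = x i := fun i hi => by simp [hz, hi]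
      have hzB : ∀ i ∈ B, z i = y i := fun i hi => by
        simp [hz, Finset.disjoint_right.mp hAB hi]
      have hset : {ω | ∀ i ∈ A, X ω i ≤ x i} ∩ {ω | ∀ i ∈ B, X ω i ≤ y i}
          = {ω | ∀ i ∈ A ∪ B, X ω i ≤ z i} := by
        ext ω
        simp only [Set.mem_inter_iff, Set.mem_setOf_eq, Finset.mem_union]
        constructor
        · rintro ⟨h1, h2⟩ i hi
          rcases hi with hi | hi
          · rw [hzA i hi]; exact h1 i hi
          · rw [hzB i hi]; exact h2 i hi
        · intro h1
          exact ⟨fun i hi => (hzA i hi) ▸ h1 i (Or.inl hi),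
            fun i hi => (hzB i hi) ▸ h1 i (Or.inr hi)⟩
      have hVA : (∫ ω', fmax A (fun i => ω' i / z i) ∂H)
          = ∫ ω', fmax A (fun i => ω' i / x i) ∂H :=
        integral_congr_ae (Filter.Eventually.of_forall fun ω' =>
          fmax_congr fun i hi => by rw [hzA i hi])
      have hVB : (∫ ω', fmax B (fun i => ω' i / z i) ∂H)
          = ∫ ω', fmax B (fun i => ω' i / y i) ∂H :=
        integral_congr_ae (Filter.Eventually.of_forall fun ω' =>
          fmax_congr fun i hi => by rw [hzB i hi])
      rw [hset, hdist (A ∪ B) hA.inl z hzpos, hdist A hA x hx, hdist B hB y hy,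
        ← ENNReal.ofReal_mul (Real.exp_nonneg _), ← Real.exp_add, ← neg_add,
        ← hadd z hzpos, hVA, hVB]
    -- π-systems
    set p1 : Set (Set Ω) :=
      {s | ∃ x : ι → ℝ, (∀ i, 0 < x i) ∧ s = {ω | ∀ i ∈ A, X ω i ≤ x i}} with hp1
    set p2 : Set (Set Ω) :=
      {s | ∃ x : ι → ℝ, (∀ i, 0 < x i) ∧ s = {ω | ∀ i ∈ B, X ω i ≤ x i}} with hp2
    have hpisys : ∀ J : Finset ι, IsPiSystem
        {s : Set Ω | ∃ x : ι → ℝ, (∀ i, 0 < x i) ∧ s = {ω | ∀ i ∈ J, X ω i ≤ x i}} := by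
      intro J
      rintro s ⟨x, hx, rfl⟩ t ⟨y, hy, rfl⟩ -
      refine ⟨fun i => min (x i) (y i), fun i => lt_min (hx i) (hy i), ?_⟩
      ext ω
      simp only [Set.mem_inter_iff, Set.mem_setOf_eq, le_min_iff]
      exact ⟨fun h i hi => ⟨h.1 i hi, h.2 i hi⟩,
        fun h => ⟨fun i hi => (h i hi).1, fun i hi => (h i hi).2⟩⟩
    have hgen : ∀ J : Finset ι, MeasurableSpace.generateFrom
        {s : Set Ω | ∃ x : ι → ℝ, (∀ i, 0 < x i) ∧ s = {ω | ∀ i ∈ J, X ω i ≤ x i}}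
        ≤ ‹MeasurableSpace Ω› := by
      intro J
      refine MeasurableSpace.generateFrom_le ?_
      rintro s ⟨x, hx, rfl⟩
      exact hE J x
    have hindepsets : IndepSets p1 p2 μ := by
      rw [IndepSets_iff]
      rintro s t ⟨x, hx, rfl⟩ ⟨y, hy, rfl⟩
      exact key x y hx hy
    have hindep : Indep (MeasurableSpace.generateFrom p1) (MeasurableSpace.generateFrom p2) μ :=
      IndepSets.indep (hgen A) (hgen B) (hpisys A) (hpisys B) rfl rfl hindepsets
    rw [indepFun_iff_measure_inter_preimage_eq_mul]
    intro s t hs ht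
    set OA : Set (↥A → ℝ) := {y : ↥A → ℝ | ∀ i, 0 < y i} with hOA
    set OB : Set (↥B → ℝ) := {y : ↥B → ℝ | ∀ i, 0 < y i} with hOB
    have hsae : (f ⁻¹' s : Set Ω) =ᵐ[μ] f ⁻¹' (s ∩ OA) := by
      rw [ae_eq_set]
      constructor
      · refine measure_mono_null ?_ (hNnull A)
        intro ω hω
        rcases hω with ⟨h1, h2⟩
        have hωO : f ω ∉ OA := fun hO => h2 ⟨h1, hO⟩
        simp only [hOA, Set.mem_setOf_eq, not_forall, not_lt] at hωO
        obtain ⟨i, hi⟩ := hωO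
        exact Set.mem_biUnion i.2 hi
      · refine measure_mono_null ?_ (measure_empty (μ := μ))
        intro ω hω
        exact absurd hω.1.1 hω.2
    have htae : (g ⁻¹' t : Set Ω) =ᵐ[μ] g ⁻¹' (t ∩ OB) := by
      rw [ae_eq_set]
      constructor
      · refine measure_mono_null ?_ (hNnull B)
        intro ω hω
        rcases hω with ⟨h1, h2⟩
        have hωO : g ω ∉ OB := fun hO => h2 ⟨h1, hO⟩
        simp only [hOB, Set.mem_setOf_eq, not_forall, not_lt] at hωO
        obtain ⟨i, hi⟩ := hωO
        exact Set.mem_biUnion i.2 hi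
      · refine measure_mono_null ?_ (measure_empty (μ := μ))
        intro ω hω
        exact absurd hω.1.1 hω.2
    have hmem1 : MeasurableSet[MeasurableSpace.generateFrom p1] (f ⁻¹' (s ∩ OA)) :=
      aux_mem_generateFrom X A s hs
    have hmem2 : MeasurableSet[MeasurableSpace.generateFrom p2] (g ⁻¹' (t ∩ OB)) :=
      aux_mem_generateFrom X B t ht
    calc μ (f ⁻¹' s ∩ g ⁻¹' t)
        = μ (f ⁻¹' (s ∩ OA) ∩ g ⁻¹' (t ∩ OB)) :=
          measure_congr (ae_eq_set_inter hsae htae)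
      _ = μ (f ⁻¹' (s ∩ OA)) * μ (g ⁻¹' (t ∩ OB)) :=
          (Indep_iff _ _ _).mp hindep _ _ hmem1 hmem2
      _ = μ (f ⁻¹' s) * μ (g ⁻¹' t) := by
          rw [measure_congr hsae, measure_congr htae]
end

section
/- Let f : (0,∞)^I → ℝ be nonnegative and homogeneous of order −1 (f(t^{-1}x) = t·f(x) for t > 0), and let g : (0,∞)^I → ℝ be a finite sum of finite products of functions, where each factor in each product is homogeneous of some order −(k+1) with k ≥ 1 an integer, divided by another such sum-of-products that is nonvanishing. If exp(f(x)) = g(x) for all x ∈ (0,∞)^I, then f ≡ 0. -/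
open Finset

private lemma coeff_mul_derivative_top {p q : Polynomial ℝ} :
    (p * Polynomial.derivative q).coeff (p.natDegree + q.natDegree) = 0 := by
  by_cases hq : Polynomial.derivative q = 0
  · simp [hq]
  · have hqd : q.natDegree ≠ 0 := fun h0 => hq (Polynomial.derivative_of_natDegree_zero h0)
    apply Polynomial.coeff_eq_zero_of_natDegree_lt
    calc (p * Polynomial.derivative q).natDegree
        ≤ p.natDegree + (Polynomial.derivative q).natDegree := Polynomial.natDegree_mul_le
      _ < p.natDegree + q.natDegree := by
          exact Nat.add_lt_add_left (Polynomial.natDegree_derivative_lt hqd) _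

/-- Homogeneity argument: if `f ≥ 0` on the positive orthant is homogeneous of order `−1`
(`f(t⁻¹x) = t·f(x)`), and `exp ∘ f` coincides there with a ratio `N/D` where `N` and `D` are
finite sums of finite products of factors, each factor homogeneous in the sense
`h(t⁻¹x) = t^m·h(x)` for some integer `m ≥ 2`, with `D` nonvanishing, then `f ≡ 0`. -/
theorem homogeneity_forces_zero {ι : Type*} [Fintype ι]
    {α β α' β' : Type*}
    (f : (ι → ℝ) → ℝ)
    (hf0 : ∀ x : ι → ℝ, (∀ i, 0 < x i) → 0 ≤ f x)
    (hfhom : ∀ t : ℝ, 0 < t → ∀ x : ι → ℝ, (∀ i, 0 < x i) → f (t⁻¹ • x) = t * f x)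
    (s : Finset α) (ts : α → Finset β) (h : α → β → (ι → ℝ) → ℝ) (m : α → β → ℕ)
    (hm : ∀ a b, 2 ≤ m a b)
    (hhom : ∀ a b, ∀ t : ℝ, 0 < t → ∀ x : ι → ℝ, (∀ i, 0 < x i) →
      h a b (t⁻¹ • x) = t ^ m a b * h a b x)
    (s' : Finset α') (ts' : α' → Finset β') (h' : α' → β' → (ι → ℝ) → ℝ) (m' : α' → β' → ℕ)
    (hm' : ∀ a b, 2 ≤ m' a b)
    (hhom' : ∀ a b, ∀ t : ℝ, 0 < t → ∀ x : ι → ℝ, (∀ i, 0 < x i) →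
      h' a b (t⁻¹ • x) = t ^ m' a b * h' a b x)
    (hD : ∀ x : ι → ℝ, (∀ i, 0 < x i) → (∑ a ∈ s', ∏ b ∈ ts' a, h' a b x) ≠ 0)
    (heq : ∀ x : ι → ℝ, (∀ i, 0 < x i) →
      Real.exp (f x) = (∑ a ∈ s, ∏ b ∈ ts a, h a b x) / (∑ a ∈ s', ∏ b ∈ ts' a, h' a b x)) :
    ∀ x : ι → ℝ, (∀ i, 0 < x i) → f x = 0 := by
  intro x hx
  by_contra hne
  have hc : 0 < f x := lt_of_le_of_ne (hf0 x hx) (Ne.symm hne)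
  set c : ℝ := f x with hcdef
  set N : Polynomial ℝ :=
    ∑ a ∈ s, Polynomial.C (∏ b ∈ ts a, h a b x) * Polynomial.X ^ (∑ b ∈ ts a, m a b) with hNdef
  set D : Polynomial ℝ :=
    ∑ a ∈ s', Polynomial.C (∏ b ∈ ts' a, h' a b x) * Polynomial.X ^ (∑ b ∈ ts' a, m' a b)
      with hDdef
  have hxt : ∀ t : ℝ, 0 < t → ∀ i, 0 < (t⁻¹ • x) i := by
    intro t ht i
    have := hx i
    have : 0 < t⁻¹ * x i := mul_pos (inv_pos.mpr ht) this
    simpa [Pi.smul_apply, smul_eq_mul] using this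
  have hNev : ∀ t : ℝ, 0 < t → N.eval t = ∑ a ∈ s, ∏ b ∈ ts a, h a b (t⁻¹ • x) := by
    intro t ht
    rw [hNdef]
    simp only [Polynomial.eval_finset_sum, Polynomial.eval_mul, Polynomial.eval_C,
      Polynomial.eval_pow, Polynomial.eval_X]
    refine Finset.sum_congr rfl fun a _ => ?_
    rw [Finset.prod_congr rfl fun b _ => hhom a b t ht x hx, Finset.prod_mul_distrib,
      Finset.prod_pow_eq_pow_sum, mul_comm]
  have hDev : ∀ t : ℝ, 0 < t → D.eval t = ∑ a ∈ s', ∏ b ∈ ts' a, h' a b (t⁻¹ • x) := by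
    intro t ht
    rw [hDdef]
    simp only [Polynomial.eval_finset_sum, Polynomial.eval_mul, Polynomial.eval_C,
      Polynomial.eval_pow, Polynomial.eval_X]
    refine Finset.sum_congr rfl fun a _ => ?_
    rw [Finset.prod_congr rfl fun b _ => hhom' a b t ht x hx, Finset.prod_mul_distrib,
      Finset.prod_pow_eq_pow_sum, mul_comm]
  have hDne : ∀ t : ℝ, 0 < t → D.eval t ≠ 0 := by
    intro t ht
    rw [hDev t ht]
    exact hD _ (hxt t ht)
  have key : ∀ t : ℝ, 0 < t → Real.exp (c * t) * D.eval t = N.eval t := by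
    intro t ht
    have h1 := heq (t⁻¹ • x) (hxt t ht)
    rw [hfhom t ht x hx, ← hNev t ht, ← hDev t ht, ← hcdef] at h1
    rw [mul_comm c t, h1]
    field_simp [hDne t ht]
  -- differentiate the identity
  have hG : ∀ t : ℝ, 0 < t →
      c * Real.exp (c * t) * D.eval t + Real.exp (c * t) * (Polynomial.derivative D).eval t
        - (Polynomial.derivative N).eval t = 0 := by
    intro t ht
    have he : HasDerivAt (fun u : ℝ => Real.exp (c * u)) (c * Real.exp (c * t)) t := by
      simpa [mul_comm] using ((hasDerivAt_id t).const_mul c).exp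
    have h1 : HasDerivAt (fun u : ℝ => Real.exp (c * u) * D.eval u - N.eval u)
        (c * Real.exp (c * t) * D.eval t + Real.exp (c * t) * (Polynomial.derivative D).eval t
          - (Polynomial.derivative N).eval t) t :=
      (he.mul (D.hasDerivAt t)).sub (N.hasDerivAt t)
    have h2 : HasDerivAt (fun u : ℝ => Real.exp (c * u) * D.eval u - N.eval u) 0 t := by
      have heq0 : (fun u : ℝ => Real.exp (c * u) * D.eval u - N.eval u) =ᶠ[nhds t]
          fun _ => (0 : ℝ) := by
        filter_upwards [Ioi_mem_nhds ht] with u hu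
        rw [key u hu, sub_self]
      exact (hasDerivAt_const t (0 : ℝ)).congr_of_eventuallyEq heq0
    exact h1.unique h2
  -- the polynomial identity
  have hP : Polynomial.C c * (N * D) + N * Polynomial.derivative D
      - Polynomial.derivative N * D = 0 := by
    apply Polynomial.eq_zero_of_infinite_isRoot
    apply Set.Infinite.mono (s := Set.Ioi (0 : ℝ))
    · intro t ht
      simp only [Set.mem_setOf_eq, Polynomial.IsRoot.def, Polynomial.eval_sub,
        Polynomial.eval_add, Polynomial.eval_mul, Polynomial.eval_C]
      have h1 := hG t ht
      have h2 := key t ht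
      linear_combination Polynomial.eval t D * h1
        - (c * Polynomial.eval t D + Polynomial.eval t (Polynomial.derivative D)) * h2
    · exact Set.Ioi_infinite 0
  have hN0 : N ≠ 0 := by
    intro h0
    have := key 1 one_pos
    rw [h0] at this
    simp at this
    exact hDne 1 one_pos (by simpa using this)
  have hD0 : D ≠ 0 := fun h0 => hDne 1 one_pos (by rw [h0]; simp)
  -- look at the top coefficient
  have hcoeff := congrArg (fun p => Polynomial.coeff p (N.natDegree + D.natDegree)) hP
  simp only [Polynomial.coeff_sub, Polynomial.coeff_add, Polynomial.coeff_C_mul,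
    Polynomial.coeff_zero] at hcoeff
  rw [Polynomial.coeff_mul_degree_add_degree, coeff_mul_derivative_top] at hcoeff
  have hc2 : (Polynomial.derivative N * D).coeff (N.natDegree + D.natDegree) = 0 := by
    have := coeff_mul_derivative_top (p := D) (q := N)
    rw [mul_comm, add_comm] at this
    exact this
  rw [hc2] at hcoeff
  have : c * (N.leadingCoeff * D.leadingCoeff) = 0 := by linarith
  rcases mul_eq_zero.mp this with h1 | h1
  · exact hne h1
  rcases mul_eq_zero.mp h1 with h2 | h2
  · exact Polynomial.leadingCoeff_ne_zero.mpr hN0 h2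
  · exact Polynomial.leadingCoeff_ne_zero.mpr hD0 h2
end

section
/- If (Y_1, …, Y_k) is a simple max-stable random vector (componentwise standard Fréchet margins with max-stability) whose components are pairwise independent, then Y_1, …, Y_k are jointly independent. -/
open MeasureTheory ProbabilityTheory Filter

lemma bonferroni_aux {Ω : Type*} [MeasurableSpace Ω] (μ : Measure Ω)
    {ι : Type*} [DecidableEq ι] (A : ι → Set Ω) (hA : ∀ i, MeasurableSet (A i))
    (s : Finset ι) :
    ∑ i ∈ s, μ (A i) ≤ μ (⋃ i ∈ s, A i) + ∑ p ∈ s.offDiag, μ (A p.1 ∩ A p.2) := by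
  induction s using Finset.induction with
  | empty => simp
  | @insert a s ha ih =>

    have hU : MeasurableSet (⋃ i ∈ s, A i) := MeasurableSet.biUnion s.countable_toSet
      fun i _ => hA i
    have h1 : μ (A a) + μ (⋃ i ∈ s, A i) =
        μ (A a ∪ ⋃ i ∈ s, A i) + μ (A a ∩ ⋃ i ∈ s, A i) :=
      (measure_union_add_inter (A a) hU).symm
    have h2 : μ (A a ∩ ⋃ i ∈ s, A i) ≤ ∑ i ∈ s, μ (A a ∩ A i) := by
      rw [Set.inter_iUnion₂]
      exact measure_biUnion_finset_le s _
    have h3 : ∑ i ∈ s, μ (A a ∩ A i) + ∑ p ∈ s.offDiag, μ (A p.1 ∩ A p.2)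
        ≤ ∑ p ∈ (insert a s).offDiag, μ (A p.1 ∩ A p.2) := by
      rw [Finset.offDiag_insert ha]
      have hsub : s.offDiag ∪ {a} ×ˢ s ⊆ s.offDiag ∪ {a} ×ˢ s ∪ s ×ˢ {a} :=
        Finset.subset_union_left
      have hdisj : Disjoint ({a} ×ˢ s) s.offDiag := by
        rw [Finset.disjoint_left]
        rintro ⟨p1, p2⟩ hp hq
        simp only [Finset.mem_product, Finset.mem_singleton] at hp
        exact ha (hp.1 ▸ (Finset.mem_offDiag.1 hq).1)
      calc ∑ i ∈ s, μ (A a ∩ A i) + ∑ p ∈ s.offDiag, μ (A p.1 ∩ A p.2)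
          = ∑ p ∈ {a} ×ˢ s, μ (A p.1 ∩ A p.2) + ∑ p ∈ s.offDiag, μ (A p.1 ∩ A p.2) := by
            rw [Finset.singleton_product, Finset.sum_map]
            rfl
        _ = ∑ p ∈ s.offDiag ∪ {a} ×ˢ s, μ (A p.1 ∩ A p.2) := by
            rw [Finset.sum_union hdisj.symm, add_comm]
        _ ≤ _ := Finset.sum_le_sum_of_subset hsub
    calc ∑ i ∈ insert a s, μ (A i) = μ (A a) + ∑ i ∈ s, μ (A i) := Finset.sum_insert ha
      _ ≤ μ (A a) + (μ (⋃ i ∈ s, A i) + ∑ p ∈ s.offDiag, μ (A p.1 ∩ A p.2)) := by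
          gcongr
      _ = (μ (A a) + μ (⋃ i ∈ s, A i)) + ∑ p ∈ s.offDiag, μ (A p.1 ∩ A p.2) := by ring
      _ = μ (A a ∪ ⋃ i ∈ s, A i) + μ (A a ∩ ⋃ i ∈ s, A i)
            + ∑ p ∈ s.offDiag, μ (A p.1 ∩ A p.2) := by rw [h1]
      _ ≤ μ (A a ∪ ⋃ i ∈ s, A i) + (∑ i ∈ s, μ (A a ∩ A i)
            + ∑ p ∈ s.offDiag, μ (A p.1 ∩ A p.2)) := by
          rw [add_assoc]; gcongr
      _ ≤ μ (⋃ i ∈ insert a s, A i) + ∑ p ∈ (insert a s).offDiag, μ (A p.1 ∩ A p.2) := by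
          rw [Finset.set_biUnion_insert]
          gcongr

lemma one_sub_exp_bounds {t : ℝ} (ht : 0 ≤ t) :
    t - t ^ 2 ≤ 1 - Real.exp (-t) ∧ 1 - Real.exp (-t) ≤ t := by
  have h1 : 1 + t ≤ Real.exp t := by have := Real.add_one_le_exp t; linarith
  have h2 : 1 + (-t) ≤ Real.exp (-t) := by
    have := Real.add_one_le_exp (-t); linarith
  constructor
  · have hpos : (0:ℝ) < 1 + t := by linarith
    have hexp : Real.exp (-t) ≤ (1 + t)⁻¹ := by
      rw [Real.exp_neg]
      exact inv_anti₀ (by positivity) h1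
    have hinv : (1 + t)⁻¹ ≤ 1 - t + t ^ 2 := by
      rw [inv_le_iff_one_le_mul₀ hpos]
      nlinarith
    nlinarith
  · linarith

lemma frechet_prod {Ω : Type*} [MeasurableSpace Ω]
    (μ : Measure Ω) [IsProbabilityMeasure μ] (k : ℕ)
    (Y : Ω → Fin k → ℝ) (hYm : ∀ i, Measurable fun ω => Y ω i)
    (hfrechet : ∀ i, ∀ y : ℝ, 0 < y →
      μ {ω | Y ω i ≤ y} = ENNReal.ofReal (Real.exp (-(1 / y))))
    (hmaxstable : ∀ n : ℕ, 0 < n → ∀ x : Fin k → ℝ, (∀ i, 0 < x i) →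
      μ {ω | ∀ i, Y ω i ≤ (n : ℝ) * x i} ^ n = μ {ω | ∀ i, Y ω i ≤ x i})
    (hpairwise : ∀ i j : Fin k, i ≠ j → IndepFun (fun ω => Y ω i) (fun ω => Y ω j) μ)
    (x : Fin k → ℝ) (hx : ∀ i, 0 < x i) :
    μ {ω | ∀ i, Y ω i ≤ x i} = ENNReal.ofReal (Real.exp (-(∑ i, 1 / x i))) := by
  set c : ℝ := ∑ i, 1 / x i with hc_def
  have hc : 0 ≤ c := Finset.sum_nonneg fun i _ => by have := hx i; positivity
  set D : ℝ := (∑ i, (1 / x i) ^ 2) + ∑ p ∈ Finset.univ.offDiag, (1 / x p.1) * (1 / x p.2)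
    with hD_def
  have hD : 0 ≤ D := by
    apply add_nonneg
    · exact Finset.sum_nonneg fun i _ => by have := hx i; positivity
    · exact Finset.sum_nonneg fun p _ => by have := hx p.1; have := hx p.2; positivity
  have hmeas : ∀ v : Fin k → ℝ, MeasurableSet {ω | ∀ i, Y ω i ≤ v i} := by
    intro v
    have : {ω | ∀ i, Y ω i ≤ v i} = ⋂ i, (fun ω => Y ω i) ⁻¹' Set.Iic (v i) := by
      ext ω; simp [Set.mem_iInter]
    rw [this]; exact MeasurableSet.iInter fun i => (hYm i) measurableSet_Iic
  set f : ℝ := (μ {ω | ∀ i, Y ω i ≤ x i}).toReal with hf_def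
  have hf0 : 0 ≤ f := ENNReal.toReal_nonneg
  -- the sandwich for each n
  have sandwich : ∀ n : ℕ, 0 < n →
      (1 - c / n ≤ (μ {ω | ∀ i, Y ω i ≤ (n : ℝ) * x i}).toReal ∧
       (μ {ω | ∀ i, Y ω i ≤ (n : ℝ) * x i}).toReal ≤ 1 - c / n + D / (n : ℝ) ^ 2) := by
    intro n hn
    have hnR : (0:ℝ) < n := Nat.cast_pos.2 hn
    set t : Fin k → ℝ := fun i => 1 / ((n : ℝ) * x i) with ht_def
    have htpos : ∀ i, 0 < t i := fun i => by have := hx i; positivity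
    set a : Fin k → ℝ := fun i => 1 - Real.exp (-t i) with ha_def
    have ha_mem : ∀ i, 0 ≤ a i ∧ a i ≤ 1 := fun i => by
      constructor
      · simp only [ha_def, sub_nonneg]
        calc Real.exp (-t i) ≤ Real.exp 0 :=
              Real.exp_le_exp.2 (by have := htpos i; linarith)
          _ = 1 := Real.exp_zero
      · have : 0 < Real.exp (-t i) := Real.exp_pos _
        simp only [ha_def]; linarith
    set A : Fin k → Set Ω := fun i => (fun ω => Y ω i) ⁻¹' Set.Ioi ((n : ℝ) * x i) with hA_def
    have hA_meas : ∀ i, MeasurableSet (A i) := fun i => (hYm i) measurableSet_Ioi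
    have hμA : ∀ i, μ (A i) = ENNReal.ofReal (a i) := by
      intro i
      have hcompl : A i = {ω | Y ω i ≤ (n : ℝ) * x i}ᶜ := by
        ext ω; simp [hA_def, not_le]
      have hms : MeasurableSet {ω | Y ω i ≤ (n : ℝ) * x i} := (hYm i) measurableSet_Iic
      rw [hcompl, measure_compl hms (measure_ne_top μ _),
        measure_univ, hfrechet i _ (by have := hx i; positivity)]
      rw [← ENNReal.ofReal_one, ← ENNReal.ofReal_sub _ (Real.exp_nonneg _)]
    have hcomplU : {ω | ∀ i, Y ω i ≤ (n : ℝ) * x i}ᶜ = ⋃ i, A i := by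
      ext ω
      simp [hA_def, not_forall, not_le]
    have hμcompl : μ ({ω | ∀ i, Y ω i ≤ (n : ℝ) * x i}ᶜ)
        = 1 - μ {ω | ∀ i, Y ω i ≤ (n : ℝ) * x i} := by
      rw [measure_compl (hmeas _) (measure_ne_top μ _), measure_univ]
    have hg1 : μ {ω | ∀ i, Y ω i ≤ (n : ℝ) * x i} ≤ 1 := prob_le_one
    have htoReal_compl : (μ ({ω | ∀ i, Y ω i ≤ (n : ℝ) * x i}ᶜ)).toReal
        = 1 - (μ {ω | ∀ i, Y ω i ≤ (n : ℝ) * x i}).toReal := by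
      rw [hμcompl, ENNReal.toReal_sub_of_le hg1 ENNReal.one_ne_top, ENNReal.toReal_one]
    constructor
    · -- lower bound via union bound
      have hUB : μ (⋃ i, A i) ≤ ∑ i, μ (A i) := measure_iUnion_fintype_le μ A
      have hreal : (μ (⋃ i, A i)).toReal ≤ ∑ i, a i := by
        have h2 : (∑ i, μ (A i)).toReal = ∑ i, a i := by
          rw [ENNReal.toReal_sum fun i _ => measure_ne_top μ _]
          exact Finset.sum_congr rfl fun i _ => by
            rw [hμA i, ENNReal.toReal_ofReal (ha_mem i).1]
        calc (μ (⋃ i, A i)).toReal ≤ (∑ i, μ (A i)).toReal :=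
              ENNReal.toReal_mono (by
                exact ENNReal.sum_ne_top.2 fun i _ => measure_ne_top μ _) hUB
          _ = ∑ i, a i := h2
      have hsum_le : ∑ i, a i ≤ c / n := by
        have : ∀ i, a i ≤ t i := fun i => (one_sub_exp_bounds (htpos i).le).2
        calc ∑ i, a i ≤ ∑ i, t i := Finset.sum_le_sum fun i _ => this i
          _ = c / n := by
            rw [hc_def, Finset.sum_div]
            exact Finset.sum_congr rfl fun i _ => by
              simp only [ht_def]; rw [div_div, mul_comm (x i)]
      have := htoReal_compl
      rw [hcomplU] at this
      linarith [hreal.trans hsum_le, this]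
    · -- upper bound via Bonferroni + pairwise independence
      have hbon := bonferroni_aux μ A hA_meas Finset.univ
      have hpair : ∀ p : Fin k × Fin k, p ∈ Finset.univ.offDiag →
          μ (A p.1 ∩ A p.2) = ENNReal.ofReal (a p.1 * a p.2) := by
        rintro ⟨i, j⟩ hp
        have hij : i ≠ j := (Finset.mem_offDiag.1 hp).2.2
        have hind := (hpairwise i j hij).measure_inter_preimage_eq_mul
          (Set.Ioi ((n : ℝ) * x i)) (Set.Ioi ((n : ℝ) * x j))
          measurableSet_Ioi measurableSet_Ioi
        simp only [hA_def]
        rw [hind, hμA i, hμA j, ← ENNReal.ofReal_mul (ha_mem i).1]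
      have hbon' : ∑ i, a i ≤ (μ (⋃ i, A i)).toReal
          + ∑ p ∈ Finset.univ.offDiag, a p.1 * a p.2 := by
        have hLHS : (∑ i, μ (A i)).toReal = ∑ i, a i := by
          rw [ENNReal.toReal_sum fun i _ => measure_ne_top μ _]
          exact Finset.sum_congr rfl fun i _ => by
            rw [hμA i, ENNReal.toReal_ofReal (ha_mem i).1]
        have hRHS : (μ (⋃ i ∈ Finset.univ, A i) + ∑ p ∈ Finset.univ.offDiag,
            μ (A p.1 ∩ A p.2)).toReal
            = (μ (⋃ i, A i)).toReal + ∑ p ∈ Finset.univ.offDiag, a p.1 * a p.2 := by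
          rw [ENNReal.toReal_add (measure_ne_top μ _)
            (ENNReal.sum_ne_top.2 fun p _ => measure_ne_top μ _),
            ENNReal.toReal_sum fun p _ => measure_ne_top μ _]
          congr 1
          · congr 2
            simp
          · exact Finset.sum_congr rfl fun p hp => by
              rw [hpair p hp,
                ENNReal.toReal_ofReal (mul_nonneg (ha_mem p.1).1 (ha_mem p.2).1)]
        calc ∑ i, a i = (∑ i, μ (A i)).toReal := hLHS.symm
          _ ≤ (μ (⋃ i ∈ Finset.univ, A i) + ∑ p ∈ Finset.univ.offDiag,
                μ (A p.1 ∩ A p.2)).toReal := by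
              apply ENNReal.toReal_mono _ hbon
              exact ENNReal.add_ne_top.2 ⟨measure_ne_top μ _,
                ENNReal.sum_ne_top.2 fun p _ => measure_ne_top μ _⟩
          _ = _ := hRHS
      have hsum_ge : c / n - D / (n : ℝ) ^ 2 ≤ ∑ i, a i - ∑ p ∈ Finset.univ.offDiag,
          a p.1 * a p.2 := by
        have h1 : ∀ i, t i - t i ^ 2 ≤ a i := fun i => (one_sub_exp_bounds (htpos i).le).1
        have h2 : ∀ p : Fin k × Fin k, a p.1 * a p.2 ≤ t p.1 * t p.2 := fun p =>
          mul_le_mul ((one_sub_exp_bounds (htpos p.1).le).2)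
            ((one_sub_exp_bounds (htpos p.2).le).2) (ha_mem p.2).1 (htpos p.1).le
        have ht_eq : ∀ i, t i = (1 / x i) / n := fun i => by
          simp only [ht_def]; rw [div_div, mul_comm (x i)]
        have hsum_t : ∑ i, t i = c / n := by
          rw [hc_def, Finset.sum_div]; exact Finset.sum_congr rfl fun i _ => ht_eq i
        have hsum_t2 : ∑ i, t i ^ 2 = (∑ i, (1 / x i) ^ 2) / (n : ℝ) ^ 2 := by
          rw [Finset.sum_div]
          exact Finset.sum_congr rfl fun i _ => by rw [ht_eq i, div_pow]
        have hsum_tt : ∑ p ∈ Finset.univ.offDiag, t p.1 * t p.2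
            = (∑ p ∈ Finset.univ.offDiag, (1 / x p.1) * (1 / x p.2)) / (n : ℝ) ^ 2 := by
          rw [Finset.sum_div]
          refine Finset.sum_congr rfl fun p _ => ?_
          rw [ht_eq p.1, ht_eq p.2]
          field_simp
        have hA1 : ∑ i, (t i - t i ^ 2) ≤ ∑ i, a i := Finset.sum_le_sum fun i _ => h1 i
        have hA2 : ∑ p ∈ Finset.univ.offDiag, a p.1 * a p.2
            ≤ ∑ p ∈ Finset.univ.offDiag, t p.1 * t p.2 :=
          Finset.sum_le_sum fun p _ => h2 p
        have hexp : ∑ i, (t i - t i ^ 2) = c / n - (∑ i, (1 / x i) ^ 2) / (n : ℝ) ^ 2 := by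
          rw [Finset.sum_sub_distrib, hsum_t, hsum_t2]
        rw [hD_def]
        rw [hexp] at hA1
        rw [hsum_tt] at hA2
        have : ((∑ i, (1 / x i) ^ 2) + ∑ p ∈ Finset.univ.offDiag,
            (1 / x p.1) * (1 / x p.2)) / (n:ℝ)^2 = (∑ i, (1 / x i) ^ 2) / (n:ℝ)^2
            + (∑ p ∈ Finset.univ.offDiag, (1 / x p.1) * (1 / x p.2)) / (n:ℝ)^2 := by
          ring
        rw [this]
        linarith
      have := htoReal_compl
      rw [hcomplU] at this
      linarith [hbon', hsum_ge, this]
  have hfg : ∀ n : ℕ, 0 < n → (μ {ω | ∀ i, Y ω i ≤ (n : ℝ) * x i}).toReal ^ n = f := by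
    intro n hn
    rw [hf_def, ← hmaxstable n hn x hx, ENNReal.toReal_pow]
  have hupper : f ≤ Real.exp (-c) := by
    have hev : ∀ n : ℕ, 0 < n → f ≤ Real.exp (-c + D / n) := by
      intro n hn
      have hnR : (0:ℝ) < n := Nat.cast_pos.2 hn
      have h1 := (sandwich n hn).2
      have h0 : 0 ≤ (μ {ω | ∀ i, Y ω i ≤ (n : ℝ) * x i}).toReal := ENNReal.toReal_nonneg
      have hexp : 1 - c / n + D / (n:ℝ) ^ 2 ≤ Real.exp (-(c / n) + D / (n:ℝ) ^ 2) := by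
        have := Real.add_one_le_exp (-(c / n) + D / (n:ℝ) ^ 2); linarith
      have h2 : (μ {ω | ∀ i, Y ω i ≤ (n : ℝ) * x i}).toReal ^ n
          ≤ (Real.exp (-(c / n) + D / (n:ℝ) ^ 2)) ^ n :=
        pow_le_pow_left₀ h0 (h1.trans hexp) n
      rw [hfg n hn] at h2
      have h3 : (Real.exp (-(c / n) + D / (n:ℝ) ^ 2)) ^ n = Real.exp (-c + D / n) := by
        rw [← Real.exp_nat_mul]
        congr 1
        field_simp
      rw [h3] at h2
      exact h2
    have htend : Filter.Tendsto (fun n : ℕ => Real.exp (-c + D / n)) Filter.atTop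
        (nhds (Real.exp (-c))) := by
      have h0 : Filter.Tendsto (fun n : ℕ => -c + D / n) Filter.atTop (nhds (-c + 0)) :=
        tendsto_const_nhds.add (tendsto_const_div_atTop_nhds_zero_nat D)
      have h1 := (Real.continuous_exp.tendsto (-c + 0)).comp h0
      simpa [Function.comp_def] using h1
    exact ge_of_tendsto htend (Filter.eventually_atTop.2 ⟨1, fun n hn => hev n hn⟩)
  have hlower : Real.exp (-c) ≤ f := by
    apply le_of_tendsto (Real.tendsto_one_add_div_pow_exp (-c))
    filter_upwards [Filter.eventually_ge_atTop (Nat.ceil c + 1)] with n hn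
    have hn0 : 0 < n := lt_of_lt_of_le (Nat.succ_pos _) hn
    have hnR : (0:ℝ) < n := Nat.cast_pos.2 hn0
    have hcn : c ≤ (n : ℝ) := by
      have h1 : c ≤ (Nat.ceil c : ℝ) := Nat.le_ceil c
      have h2 : ((Nat.ceil c + 1 : ℕ) : ℝ) ≤ (n : ℝ) := Nat.cast_le.2 hn
      push_cast at h2
      linarith
    have hbase : 0 ≤ 1 + -c / n := by
      have h' : c / n ≤ 1 := by rw [div_le_one hnR]; exact hcn
      rw [neg_div]
      linarith
    have h1 := (sandwich n hn0).1
    have h2 : (1 + -c / n) ^ n ≤ (μ {ω | ∀ i, Y ω i ≤ (n : ℝ) * x i}).toReal ^ n := by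
      apply pow_le_pow_left₀ hbase
      have : (1 : ℝ) + -c / n = 1 - c / n := by ring
      rw [this]
      exact h1
    rw [hfg n hn0] at h2
    exact h2
  have hfeq : f = Real.exp (-c) := le_antisymm hupper hlower
  rw [← hfeq, hf_def, ENNReal.ofReal_toReal (measure_ne_top μ _)]

lemma frechet_tail_zero {Ω : Type*} [MeasurableSpace Ω]
    (μ : Measure Ω) [IsProbabilityMeasure μ] {g : Ω → ℝ}
    (hfrechet : ∀ y : ℝ, 0 < y → μ {ω | g ω ≤ y} = ENNReal.ofReal (Real.exp (-(1 / y))))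
    {t : ℝ} (ht : t ≤ 0) : μ {ω | g ω ≤ t} = 0 := by
  have hb : ∀ m : ℕ, μ {ω | g ω ≤ t} ≤ ENNReal.ofReal (Real.exp (-((m : ℝ) + 1))) := by
    intro m
    have hpos : (0:ℝ) < 1 / ((m : ℝ) + 1) := by positivity
    have hsub : {ω | g ω ≤ t} ⊆ {ω | g ω ≤ 1 / ((m : ℝ) + 1)} := fun ω hω =>
      le_trans hω (le_trans ht hpos.le)
    calc μ {ω | g ω ≤ t} ≤ μ {ω | g ω ≤ 1 / ((m : ℝ) + 1)} := measure_mono hsub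
      _ = ENNReal.ofReal (Real.exp (-(1 / (1 / ((m : ℝ) + 1))))) := hfrechet _ hpos
      _ = ENNReal.ofReal (Real.exp (-((m : ℝ) + 1))) := by rw [one_div_one_div]
  have htend : Filter.Tendsto (fun m : ℕ => ENNReal.ofReal (Real.exp (-((m : ℝ) + 1))))
      Filter.atTop (nhds 0) := by
    have h1 : Filter.Tendsto (fun m : ℕ => -((m : ℝ) + 1)) Filter.atTop Filter.atBot := by
      apply Filter.tendsto_neg_atBot_iff.2
      exact Filter.tendsto_atTop_add_const_right _ 1 tendsto_natCast_atTop_atTop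
    have h2 := Real.tendsto_exp_atBot.comp h1
    have h3 := (ENNReal.continuous_ofReal.tendsto 0).comp h2
    simpa [Function.comp_def] using h3
  have := ge_of_tendsto' htend hb
  exact le_antisymm this zero_le


/-- If `(Y_1, …, Y_k)` is a simple max-stable random vector (standard Fréchet margins and
max-stability: `P(Y ≤ n·x)^n = P(Y ≤ x)`) whose components are pairwise independent, then
the components are jointly independent. -/
theorem pairwise_indep_implies_joint_indep {Ω : Type*} [MeasurableSpace Ω]
    (μ : Measure Ω) [IsProbabilityMeasure μ] (k : ℕ)
    (Y : Ω → Fin k → ℝ) (hYm : ∀ i, Measurable fun ω => Y ω i)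
    (hfrechet : ∀ i, ∀ y : ℝ, 0 < y →
      μ {ω | Y ω i ≤ y} = ENNReal.ofReal (Real.exp (-(1 / y))))
    (hmaxstable : ∀ n : ℕ, 0 < n → ∀ x : Fin k → ℝ, (∀ i, 0 < x i) →
      μ {ω | ∀ i, Y ω i ≤ (n : ℝ) * x i} ^ n = μ {ω | ∀ i, Y ω i ≤ x i})
    (hpairwise : ∀ i j : Fin k, i ≠ j → IndepFun (fun ω => Y ω i) (fun ω => Y ω j) μ) :
    iIndepFun
      (fun i ω => Y ω i) μ := by
  classical
  set π : Fin k → Set (Set Ω) :=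
    fun i => (fun s => (fun ω => Y ω i) ⁻¹' s) '' Set.range Set.Iic with hπ_def
  have h_pi : ∀ i, IsPiSystem (π i) := by
    intro i s hs u hu _
    obtain ⟨s', ⟨a, rfl⟩, rfl⟩ := hs
    obtain ⟨u', ⟨b, rfl⟩, rfl⟩ := hu
    refine ⟨Set.Iic (min a b), ⟨min a b, rfl⟩, ?_⟩
    rw [← Set.preimage_inter, Set.Iic_inter_Iic]
  have h_generate : ∀ i, MeasurableSpace.comap (fun ω => Y ω i)
      (inferInstance : MeasurableSpace ℝ) = MeasurableSpace.generateFrom (π i) := by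
    intro i
    have hb : (inferInstance : MeasurableSpace ℝ)
        = MeasurableSpace.generateFrom (Set.range Set.Iic) := by
      rw [BorelSpace.measurable_eq (α := ℝ), borel_eq_generateFrom_Iic ℝ]
    rw [hb, MeasurableSpace.comap_generateFrom]
  have h_ind : iIndepSets π μ := by
    rw [iIndepSets_iff]
    intro S f hf
    have hft : ∀ i ∈ S, ∃ r : ℝ, f i = (fun ω => Y ω i) ⁻¹' Set.Iic r := by
      intro i hi
      obtain ⟨u, ⟨r, rfl⟩, hpre⟩ := hf i hi
      exact ⟨r, hpre.symm⟩
    choose! r hr using hft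
    by_cases hneg : ∃ i ∈ S, r i ≤ 0
    · obtain ⟨i0, hi0S, hi0⟩ := hneg
      have h0 : μ (f i0) = 0 := by
        rw [hr i0 hi0S]
        exact frechet_tail_zero μ (hfrechet i0) hi0
      have hL : μ (⋂ i ∈ S, f i) = 0 := by
        refine le_antisymm ?_ zero_le
        rw [← h0]
        exact measure_mono (Set.biInter_subset_of_mem hi0S)
      rw [hL, eq_comm]
      exact Finset.prod_eq_zero hi0S h0
    · push_neg at hneg
      have hrpos : ∀ i ∈ S, 0 < r i := fun i hi => (hneg i hi)
      set x : ℕ → Fin k → ℝ := fun M i => if i ∈ S then r i else (M : ℝ) + 1 with hx_def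
      have hxpos : ∀ M i, 0 < x M i := by
        intro M i
        by_cases hi : i ∈ S <;> simp only [hx_def, hi, if_true, if_false]
        · exact hrpos i hi
        · positivity
      have hkey : ∀ M : ℕ, μ {ω | ∀ i, Y ω i ≤ x M i}
          = ∏ i, ENNReal.ofReal (Real.exp (-(1 / x M i))) := by
        intro M
        rw [frechet_prod μ k Y hYm hfrechet hmaxstable hpairwise (x M) (hxpos M)]
        rw [← Finset.sum_neg_distrib, Real.exp_sum, ENNReal.ofReal_prod_of_nonneg
          fun i _ => (Real.exp_nonneg _)]
      have hkey2 : ∀ M : ℕ, μ {ω | ∀ i, Y ω i ≤ x M i}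
          = (∏ i ∈ S, ENNReal.ofReal (Real.exp (-(1 / r i))))
            * ENNReal.ofReal (Real.exp (-(1 / ((M : ℝ) + 1)))) ^ Sᶜ.card := by
        intro M
        rw [hkey M, ← Finset.prod_mul_prod_compl S]
        congr 1
        · exact Finset.prod_congr rfl fun i hi => by
            simp only [hx_def, if_pos hi]
        · rw [Finset.prod_congr rfl (fun i hi => ?_), Finset.prod_const]
          have hi' : i ∉ S := Finset.mem_compl.1 hi
          simp only [hx_def, if_neg hi']
      -- monotone union
      have hmono : Monotone fun M : ℕ => {ω | ∀ i, Y ω i ≤ x M i} := by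
        intro M M' hMM' ω hω i
        refine le_trans (hω i) ?_
        by_cases hi : i ∈ S <;> simp only [hx_def, hi, if_true, if_false]
        · exact le_refl _
        · have : (M : ℝ) ≤ M' := Nat.cast_le.2 hMM'
          linarith
      have hUnion : (⋃ M : ℕ, {ω | ∀ i, Y ω i ≤ x M i}) = ⋂ i ∈ S, f i := by
        ext ω
        simp only [Set.mem_iUnion, Set.mem_setOf_eq, Set.mem_iInter]
        constructor
        · rintro ⟨M, hM⟩ i hi
          rw [hr i hi]
          have := hM i
          rw [hx_def] at this
          simp only [if_pos hi] at this
          exact this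
        · intro h
          obtain ⟨M, hM⟩ := exists_nat_ge (∑ j, |Y ω j|)
          refine ⟨M, fun i => ?_⟩
          by_cases hi : i ∈ S <;> simp only [hx_def, hi, if_true, if_false]
          · have := h i hi
            rw [hr i hi] at this
            exact this
          · have h1 : Y ω i ≤ |Y ω i| := le_abs_self _
            have h2 : |Y ω i| ≤ ∑ j, |Y ω j| :=
              Finset.single_le_sum (f := fun j => |Y ω j|) (fun j _ => abs_nonneg _)
                (Finset.mem_univ i)
            linarith
      have hLtend : Filter.Tendsto (fun M : ℕ => μ {ω | ∀ i, Y ω i ≤ x M i})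
          Filter.atTop (nhds (μ (⋂ i ∈ S, f i))) := by
        have := tendsto_measure_iUnion_atTop (μ := μ) hmono
        rwa [hUnion] at this
      have hRtend : Filter.Tendsto (fun M : ℕ =>
          (∏ i ∈ S, ENNReal.ofReal (Real.exp (-(1 / r i))))
            * ENNReal.ofReal (Real.exp (-(1 / ((M : ℝ) + 1)))) ^ Sᶜ.card)
          Filter.atTop
          (nhds ((∏ i ∈ S, ENNReal.ofReal (Real.exp (-(1 / r i)))) * 1 ^ Sᶜ.card)) := by
        refine ENNReal.Tendsto.const_mul (ENNReal.Tendsto.pow ?_) (Or.inl (by simp))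
        
        have h1 : Filter.Tendsto (fun M : ℕ => -(1 / ((M : ℝ) + 1))) Filter.atTop (nhds 0) := by
          have := tendsto_one_div_add_atTop_nhds_zero_nat (𝕜 := ℝ)
          simpa using this.neg
        have h2 := (Real.continuous_exp.tendsto 0).comp h1
        have h3 := (ENNReal.continuous_ofReal.tendsto _).comp h2
        simpa [Function.comp_def] using h3
      have heq : μ (⋂ i ∈ S, f i)
          = (∏ i ∈ S, ENNReal.ofReal (Real.exp (-(1 / r i)))) * 1 ^ Sᶜ.card := by
        apply tendsto_nhds_unique _ hRtend
        have : (fun M : ℕ => μ {ω | ∀ i, Y ω i ≤ x M i}) = fun M : ℕ =>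
            (∏ i ∈ S, ENNReal.ofReal (Real.exp (-(1 / r i))))
              * ENNReal.ofReal (Real.exp (-(1 / ((M : ℝ) + 1)))) ^ Sᶜ.card := funext hkey2
        rwa [this] at hLtend
      rw [heq, one_pow, mul_one]
      refine Finset.prod_congr rfl fun i hi => ?_
      rw [hr i hi]
      exact (hfrechet i (r i) (hrpos i hi)).symm
  rw [iIndepFun_iff_iIndep]
  exact iIndepSets.iIndep (fun i => (hYm i).comap_le) π h_pi h_generate h_ind
end

section
/- Möbius inversion for exponent functions: defining d_A(x) := Σ_{B ⊇ A^c, B ≠ ∅} (-1)^{|B∩A|+1} V^B(x_B) for each nonempty A ⊆ I, one recovers V^A(x_A) = Σ_{B ⊆ I, B ∩ A ≠ ∅} d_B(x) for every nonempty A ⊆ I and x ∈ (0,∞)^I. -/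
open Finset MeasureTheory

variable {ι : Type*} [Fintype ι] [DecidableEq ι]

lemma sum_pow_neg_one_real {α : Type*} [DecidableEq α] (s : Finset α) :
    (∑ m ∈ s.powerset, (-1 : ℝ) ^ m.card) = if s = ∅ then 1 else 0 := by
  have h := Finset.sum_powerset_neg_one_pow_card (x := s)
  have h2 : ((∑ m ∈ s.powerset, (-1 : ℤ) ^ m.card : ℤ) : ℝ)
      = ∑ m ∈ s.powerset, (-1:ℝ)^m.card := by push_cast; rfl
  rw [← h2, h]; split <;> norm_num

lemma key {ι : Type*} [Fintype ι] [DecidableEq ι] (A B' : Finset ι)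
    (hA : A.Nonempty) (hB' : B'.Nonempty) :
    ∑ B ∈ Finset.univ.powerset.filter (fun B => (B ∩ A).Nonempty ∧ Bᶜ ⊆ B'),
      (-1:ℝ)^((B' ∩ B).card + 1) = if B' = A then 1 else 0 := by
  have hstep : ∑ B ∈ Finset.univ.powerset.filter (fun B => (B ∩ A).Nonempty ∧ Bᶜ ⊆ B'),
      (-1:ℝ)^((B' ∩ B).card + 1)
      = ∑ C ∈ B'.powerset.filter (fun C => ((C ∪ B'ᶜ) ∩ A).Nonempty),
        (-1:ℝ)^(C.card + 1) := by
    refine Finset.sum_bij' (fun B _ => B ∩ B') (fun C _ => C ∪ B'ᶜ) ?_ ?_ ?_ ?_ ?_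
    · intro B hB
      simp only [mem_filter, mem_powerset] at hB ⊢
      obtain ⟨-, hne, hcs⟩ := hB
      have hsub : B'ᶜ ⊆ B := by
        intro i hi
        by_contra hiB
        exact (Finset.mem_compl.mp hi) (hcs (Finset.mem_compl.mpr hiB))
      have hBeq : B ∩ B' ∪ B'ᶜ = B := by
        ext i
        simp only [mem_union, mem_inter, Finset.mem_compl]
        constructor
        · rintro (⟨h1, _⟩ | h1)
          · exact h1
          · exact hsub (Finset.mem_compl.mpr h1)
        · intro hiB
          by_cases hi' : i ∈ B'
          · exact Or.inl ⟨hiB, hi'⟩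
          · exact Or.inr hi'
      exact ⟨inter_subset_right, by rw [hBeq]; exact hne⟩
    · intro C hC
      simp only [mem_filter, mem_powerset] at hC ⊢
      refine ⟨Finset.subset_univ _, hC.2, ?_⟩
      intro i hi
      simp only [Finset.mem_compl, mem_union, not_or, not_not] at hi
      exact hi.2
    · intro B hB
      simp only [mem_filter, mem_powerset] at hB
      obtain ⟨-, -, hcs⟩ := hB
      have hsub : B'ᶜ ⊆ B := by
        intro i hi
        by_contra hiB
        exact (Finset.mem_compl.mp hi) (hcs (Finset.mem_compl.mpr hiB))
      ext i
      simp only [mem_union, mem_inter, Finset.mem_compl]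
      constructor
      · rintro (⟨h1, _⟩ | h1)
        · exact h1
        · exact hsub (Finset.mem_compl.mpr h1)
      · intro hiB
        by_cases hi' : i ∈ B'
        · exact Or.inl ⟨hiB, hi'⟩
        · exact Or.inr hi'
    · intro C hC
      simp only [mem_filter, mem_powerset] at hC
      ext i
      simp only [mem_inter, mem_union, Finset.mem_compl]
      constructor
      · rintro ⟨h1 | h1, h2⟩
        · exact h1
        · exact absurd h2 h1
      · intro hi
        exact ⟨Or.inl hi, hC.1 hi⟩
    · intro B hB
      simp only [mem_filter, mem_powerset] at hB
      rw [Finset.inter_comm]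
  rw [hstep]
  have hsplit := Finset.sum_filter_add_sum_filter_not B'.powerset
      (fun C => ((C ∪ B'ᶜ) ∩ A).Nonempty) (fun C => (-1:ℝ)^C.card)
  have h0 : ∑ C ∈ B'.powerset, (-1:ℝ)^C.card = 0 := by
    rw [sum_pow_neg_one_real]; simp [Finset.nonempty_iff_ne_empty.mp hB']
  have hT : ∑ C ∈ B'.powerset.filter (fun C => ((C ∪ B'ᶜ) ∩ A).Nonempty), (-1:ℝ)^(C.card+1)
      = ∑ C ∈ B'.powerset.filter (fun C => ¬((C ∪ B'ᶜ) ∩ A).Nonempty), (-1:ℝ)^C.card := by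
    have hneg : ∀ C : Finset ι, (-1:ℝ)^(C.card+1) = -(-1:ℝ)^C.card := by intro C; ring
    simp only [hneg, Finset.sum_neg_distrib]
    linarith [hsplit, h0]
  rw [hT]
  by_cases hAB : A ⊆ B'
  · have hset : B'.powerset.filter (fun C => ¬((C ∪ B'ᶜ) ∩ A).Nonempty) = (B' \ A).powerset := by
      ext C
      simp only [mem_filter, mem_powerset, Finset.not_nonempty_iff_eq_empty]
      constructor
      · rintro ⟨hCB, hemp⟩
        intro i hi
        rw [Finset.mem_sdiff]
        refine ⟨hCB hi, fun hiA => ?_⟩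
        have hmem : i ∈ (C ∪ B'ᶜ) ∩ A := Finset.mem_inter.mpr ⟨Finset.mem_union_left _ hi, hiA⟩
        rw [hemp] at hmem; exact absurd hmem (Finset.notMem_empty i)
      · intro hC
        refine ⟨hC.trans Finset.sdiff_subset, ?_⟩
        rw [Finset.eq_empty_iff_forall_notMem]
        intro i hi
        rw [Finset.mem_inter, Finset.mem_union, Finset.mem_compl] at hi
        obtain ⟨(h1 | h1), h2⟩ := hi
        · exact (Finset.mem_sdiff.mp (hC h1)).2 h2
        · exact h1 (hAB h2)
    rw [hset, sum_pow_neg_one_real]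
    have hiff : (B' \ A = ∅) ↔ (B' = A) := by
      rw [Finset.sdiff_eq_empty_iff_subset]
      exact ⟨fun h => Finset.Subset.antisymm h hAB, fun h => h.le⟩
    simp only [hiff]
  · have hset : B'.powerset.filter (fun C => ¬((C ∪ B'ᶜ) ∩ A).Nonempty) = ∅ := by
      rw [Finset.filter_eq_empty_iff]
      intro C hC
      obtain ⟨a, haA, haB⟩ := Finset.not_subset.mp hAB
      exact fun h => h ⟨a, Finset.mem_inter.mpr
        ⟨Finset.mem_union_right _ (Finset.mem_compl.mpr haB), haA⟩⟩
    rw [hset, Finset.sum_empty, if_neg (by rintro rfl; exact hAB le_rfl)]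


/-- Exponent function `V^A(x_A) = ∫ max_{i∈A} ω_i/x_i dH`. -/
noncomputable def Vexp (H : Measure (ι → ℝ)) (x : ι → ℝ) (A : Finset ι) : ℝ :=
  ∫ ω, fmax A (fun i => ω i / x i) ∂H

/-- Möbius inversion `d_A(x) = Σ_{B ⊇ Aᶜ, B ≠ ∅} (-1)^(|B∩A|+1) V^B(x_B)`. -/
noncomputable def dA (H : Measure (ι → ℝ)) (x : ι → ℝ) (A : Finset ι) : ℝ :=
  ∑ B ∈ Finset.univ.powerset.filter (fun B => Aᶜ ⊆ B ∧ B.Nonempty),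
    (-1 : ℝ) ^ ((B ∩ A).card + 1) * Vexp H x B

/-- `χ_A(x_A) = Σ_{∅ ≠ B ⊆ A} (-1)^(|B|+1) V^B(x_B)`. -/
noncomputable def chiA (H : Measure (ι → ℝ)) (x : ι → ℝ) (A : Finset ι) : ℝ :=
  ∑ B ∈ A.powerset.filter Finset.Nonempty,
    (-1 : ℝ) ^ (B.card + 1) * Vexp H x B

/-- Möbius inversion for exponent functions: with
`d_B(x) = Σ_{B' ⊇ Bᶜ, B' ≠ ∅} (-1)^(|B'∩B|+1) V^{B'}(x)`, one recovers
`V^A(x_A) = Σ_{B ⊆ I, B ∩ A ≠ ∅} d_B(x)` for every nonempty `A ⊆ I` and `x > 0`. -/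
theorem moebius_inversion_exponent [Nonempty ι]
    (H : Measure (ι → ℝ)) [IsFiniteMeasure H]
    (hpos : ∀ᵐ ω ∂H, ∀ i, 0 ≤ ω i)
    (hint : ∀ i, Integrable (fun ω => ω i) H)
    (x : ι → ℝ) (hx : ∀ i, 0 < x i)
    (A : Finset ι) (hA : A.Nonempty) :
    Vexp H x A
      = ∑ B ∈ Finset.univ.powerset.filter (fun B => (B ∩ A).Nonempty), dA H x B := by
  classical
  have step1 : ∑ B ∈ Finset.univ.powerset.filter (fun B => (B ∩ A).Nonempty), dA H x B
      = ∑ B ∈ Finset.univ.powerset, ∑ B' ∈ Finset.univ.powerset,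
          (if ((B ∩ A).Nonempty ∧ (Bᶜ ⊆ B' ∧ B'.Nonempty)) then
            (-1:ℝ)^((B' ∩ B).card + 1) * Vexp H x B' else 0) := by
    rw [Finset.sum_filter]
    refine Finset.sum_congr rfl fun B _ => ?_
    by_cases hB : (B ∩ A).Nonempty
    · rw [if_pos hB, dA, Finset.sum_filter]
      refine Finset.sum_congr rfl fun B' _ => ?_
      simp [hB]
    · rw [if_neg hB]
      simp [hB]
  rw [step1, Finset.sum_comm]
  have step2 : ∀ B' ∈ Finset.univ.powerset,
      (∑ B ∈ Finset.univ.powerset,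
        if ((B ∩ A).Nonempty ∧ (Bᶜ ⊆ B' ∧ B'.Nonempty)) then
          (-1:ℝ)^((B' ∩ B).card + 1) * Vexp H x B' else 0)
      = (if B' = A then 1 else 0) * Vexp H x B' := by
    intro B' _
    by_cases hB' : B'.Nonempty
    · have hsplit : ∀ B : Finset ι, (if ((B ∩ A).Nonempty ∧ (Bᶜ ⊆ B' ∧ B'.Nonempty)) then
          (-1:ℝ)^((B' ∩ B).card + 1) * Vexp H x B' else 0)
          = (if ((B ∩ A).Nonempty ∧ Bᶜ ⊆ B') then (-1:ℝ)^((B' ∩ B).card + 1) else 0)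
              * Vexp H x B' := by
        intro B; by_cases h : (B ∩ A).Nonempty ∧ Bᶜ ⊆ B' <;> simp [h, hB']
      simp only [hsplit, ← Finset.sum_mul, ← Finset.sum_filter]
      rw [key A B' hA hB']
    · have hne : B' ≠ A := by rintro rfl; exact hB' hA
      simp [hB', hne]
  rw [Finset.sum_congr rfl step2]
  simp only [ite_mul, one_mul, zero_mul]
  rw [Finset.sum_ite_eq' Finset.univ.powerset A (fun B' => Vexp H x B'),
    if_pos (Finset.mem_powerset.mpr (Finset.subset_univ A))]
end

section
/- For disjoint nonempty A, B ⊆ I with C = I\(A∪B), the Möbius decomposition d_{A,B}(x) = Σ_{L ⊆ I : L∩A ≠ ∅, L∩B ≠ ∅, L∩C = ∅} d_L(x) holds, where d_{A,B}(x) = V^{A∪C}(x_{A∪C}) + V^{B∪C}(x_{B∪C}) − V^I(x) − V^C(x_C) and d_L is the Möbius inversion of the family (V^A). -/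
open Finset MeasureTheory

variable {ι : Type*} [Fintype ι] [DecidableEq ι]

private lemma sum_pow_card_real (s : Finset ι) :
    (∑ m ∈ s.powerset, (-1 : ℝ) ^ m.card) = if s = ∅ then 1 else 0 := by
  have h := Finset.sum_powerset_neg_one_pow_card (x := s)
  have : ((∑ m ∈ s.powerset, (-1 : ℤ) ^ m.card : ℤ) : ℝ)
      = ∑ m ∈ s.powerset, (-1 : ℝ) ^ m.card := by push_cast; ring
  rw [← this, h]
  split <;> norm_num


private lemma union_nonempty' {s t : Finset ι} :
    (s ∪ t).Nonempty ↔ s.Nonempty ∨ t.Nonempty := by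
  constructor
  · rintro ⟨a, ha⟩
    rcases Finset.mem_union.1 ha with h | h
    · exact Or.inl ⟨a, h⟩
    · exact Or.inr ⟨a, h⟩
  · rintro (h | h)
    exacts [h.inl, h.inr]

private lemma complsub {s t : Finset ι} : sᶜ ⊆ t ↔ tᶜ ⊆ s := by
  constructor <;> intro h a ha <;> by_contra hc <;>
    exact (Finset.mem_compl.1 ha) (h (Finset.mem_compl.2 hc))

private lemma union_inter_compl {B L : Finset ι} (h : Bᶜ ⊆ L) : Bᶜ ∪ L ∩ B = L := by
  ext a
  simp only [Finset.mem_union, Finset.mem_inter, Finset.mem_compl]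
  constructor
  · rintro (ha | ⟨ha, -⟩)
    · exact h (Finset.mem_compl.2 ha)
    · exact ha
  · intro ha
    by_cases hb : a ∈ B
    · exact Or.inr ⟨ha, hb⟩
    · exact Or.inl hb

private lemma compl_union_inter {B S : Finset ι} (h : S ⊆ B) : (Bᶜ ∪ S) ∩ B = S := by
  ext a
  simp only [Finset.mem_inter, Finset.mem_union, Finset.mem_compl]
  constructor
  · rintro ⟨ha | ha, hb⟩
    · exact absurd hb ha
    · exact ha
  · intro ha
    exact ⟨Or.inr ha, h ha⟩

private lemma coeff_sum (A B : Finset ι) (hB : B.Nonempty) :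
    ∑ L ∈ Finset.univ.powerset.filter (fun L => (L ∩ A).Nonempty ∧ Lᶜ ⊆ B),
      (-1 : ℝ) ^ ((B ∩ L).card + 1) = if B = A then 1 else 0 := by
  have key : ∑ L ∈ Finset.univ.powerset.filter (fun L => (L ∩ A).Nonempty ∧ Lᶜ ⊆ B),
      (-1 : ℝ) ^ ((B ∩ L).card + 1)
      = ∑ S ∈ B.powerset.filter (fun S => ((Bᶜ ∪ S) ∩ A).Nonempty),
        (-1 : ℝ) ^ (S.card + 1) := by
    apply Finset.sum_nbij' (fun L => L ∩ B) (fun S => Bᶜ ∪ S)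
    · intro L hL
      simp only [mem_filter, mem_powerset] at hL ⊢
      obtain ⟨-, h1, h2⟩ := hL
      exact ⟨Finset.inter_subset_right, by rwa [union_inter_compl (complsub.1 h2)]⟩
    · intro S hS
      simp only [mem_filter, mem_powerset] at hS ⊢
      exact ⟨Finset.subset_univ _, hS.2, complsub.2 Finset.subset_union_left⟩
    · intro L hL
      simp only [mem_filter, mem_powerset] at hL
      exact union_inter_compl (complsub.1 hL.2.2)
    · intro S hS
      simp only [mem_filter, mem_powerset] at hS
      exact compl_union_inter hS.1
    · intro L hL
      rw [Finset.inter_comm]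
  rw [key]
  by_cases hcase : (Bᶜ ∩ A).Nonempty
  · have hne : B ≠ A := by
      rintro rfl
      obtain ⟨a, ha⟩ := hcase
      simp only [Finset.mem_inter, Finset.mem_compl] at ha
      exact ha.1 ha.2
    rw [if_neg hne]
    have hfil : B.powerset.filter (fun S => ((Bᶜ ∪ S) ∩ A).Nonempty) = B.powerset := by
      apply Finset.filter_true_of_mem
      intro S _
      rw [Finset.union_inter_distrib_right]
      exact hcase.mono Finset.subset_union_left
    rw [hfil]
    have : ∑ S ∈ B.powerset, (-1 : ℝ) ^ (S.card + 1)
        = -∑ S ∈ B.powerset, (-1 : ℝ) ^ S.card := by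
      rw [← Finset.sum_neg_distrib]; apply Finset.sum_congr rfl; intro S _; ring
    rw [this, sum_pow_card_real, if_neg (Finset.nonempty_iff_ne_empty.mp hB)]; ring
  · have hempty : Bᶜ ∩ A = ∅ := Finset.not_nonempty_iff_eq_empty.mp hcase
    have hAB : A ⊆ B := by
      intro a ha
      by_contra hnb
      exact (Finset.eq_empty_iff_forall_notMem.mp hempty a)
        (Finset.mem_inter.2 ⟨Finset.mem_compl.2 hnb, ha⟩)
    have hcond : ∀ S ∈ B.powerset, ((Bᶜ ∪ S) ∩ A).Nonempty ↔ (S ∩ A).Nonempty := by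
      intro S _
      rw [Finset.union_inter_distrib_right, hempty, Finset.empty_union]
    rw [Finset.filter_congr hcond]
    have hsplit := Finset.sum_filter_add_sum_filter_not B.powerset
      (fun S => (S ∩ A).Nonempty) (fun S => (-1 : ℝ) ^ (S.card + 1))
    have htot : ∑ S ∈ B.powerset, (-1 : ℝ) ^ (S.card + 1) = 0 := by
      have : ∑ S ∈ B.powerset, (-1 : ℝ) ^ (S.card + 1)
          = -∑ S ∈ B.powerset, (-1 : ℝ) ^ S.card := by
        rw [← Finset.sum_neg_distrib]; apply Finset.sum_congr rfl; intro S _; ring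
      rw [this, sum_pow_card_real, if_neg (Finset.nonempty_iff_ne_empty.mp hB)]; ring
    have hnotfil : B.powerset.filter (fun S => ¬(S ∩ A).Nonempty) = (B \ A).powerset := by
      ext S
      simp only [mem_filter, mem_powerset, Finset.not_nonempty_iff_eq_empty,
        Finset.subset_sdiff, ← Finset.disjoint_iff_inter_eq_empty]
    have h2 : ∑ S ∈ B.powerset.filter (fun S => ¬(S ∩ A).Nonempty),
        (-1 : ℝ) ^ (S.card + 1) = -(if B \ A = ∅ then 1 else 0) := by
      rw [hnotfil]
      have : ∑ S ∈ (B \ A).powerset, (-1 : ℝ) ^ (S.card + 1)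
          = -∑ S ∈ (B \ A).powerset, (-1 : ℝ) ^ S.card := by
        rw [← Finset.sum_neg_distrib]; apply Finset.sum_congr rfl; intro S _; ring
      rw [this, sum_pow_card_real]
    have hiff : B \ A = ∅ ↔ B = A := by
      rw [Finset.sdiff_eq_empty_iff_subset]
      exact ⟨fun h => Finset.Subset.antisymm h hAB, fun h => h ▸ Finset.Subset.refl _⟩
    have hfin : ∑ S ∈ B.powerset.filter (fun S => (S ∩ A).Nonempty), (-1 : ℝ) ^ (S.card + 1)
        = if B \ A = ∅ then 1 else 0 := by
      rw [htot, h2] at hsplit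
      linarith
    rw [hfin]
    simp only [hiff]

private lemma inv_lemma (f : Finset ι → ℝ) (A : Finset ι) (hA : A.Nonempty) :
    ∑ L ∈ Finset.univ.powerset.filter (fun L => (L ∩ A).Nonempty),
      ∑ B ∈ Finset.univ.powerset.filter (fun B => Lᶜ ⊆ B ∧ B.Nonempty),
        (-1 : ℝ) ^ ((B ∩ L).card + 1) * f B = f A := by
  classical
  have step1 : ∑ L ∈ Finset.univ.powerset.filter (fun L => (L ∩ A).Nonempty),
      ∑ B ∈ Finset.univ.powerset.filter (fun B => Lᶜ ⊆ B ∧ B.Nonempty),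
        (-1 : ℝ) ^ ((B ∩ L).card + 1) * f B
      = ∑ L ∈ Finset.univ.powerset, ∑ B ∈ Finset.univ.powerset,
        if (L ∩ A).Nonempty ∧ Lᶜ ⊆ B ∧ B.Nonempty
          then (-1 : ℝ) ^ ((B ∩ L).card + 1) * f B else 0 := by
    rw [Finset.sum_filter]
    refine Finset.sum_congr rfl fun L _ => ?_
    rw [Finset.sum_filter]
    by_cases hp : (L ∩ A).Nonempty
    · simp [hp]
    · simp [hp]
  rw [step1, Finset.sum_comm]
  have step2 : ∀ B ∈ Finset.univ.powerset,
      (∑ L ∈ Finset.univ.powerset,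
        if (L ∩ A).Nonempty ∧ Lᶜ ⊆ B ∧ B.Nonempty
          then (-1 : ℝ) ^ ((B ∩ L).card + 1) * f B else 0)
      = if B = A then f A else 0 := by
    intro B _
    by_cases hB : B.Nonempty
    · have hcong : Finset.univ.powerset.filter
          (fun L => (L ∩ A).Nonempty ∧ Lᶜ ⊆ B ∧ B.Nonempty)
          = Finset.univ.powerset.filter (fun L => (L ∩ A).Nonempty ∧ Lᶜ ⊆ B) := by
        apply Finset.filter_congr
        intro L _
        simp [hB]
      rw [← Finset.sum_filter, hcong, ← Finset.sum_mul, coeff_sum A B hB]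
      by_cases hBA : B = A
      · subst hBA; simp
      · simp [hBA]
    · have hBA : B ≠ A := by rintro rfl; exact hB hA
      simp [hB, hBA]
  rw [Finset.sum_congr rfl step2, Finset.sum_ite_eq' Finset.univ.powerset A (fun _ => f A),
    if_pos (Finset.mem_powerset.2 (Finset.subset_univ A))]

/-- Möbius decomposition of `d_{A,B}`: for disjoint nonempty `A, B ⊆ I` with
`C = I \ (A∪B)`, `d_{A,B}(x) = V^{A∪C}(x) + V^{B∪C}(x) − V^I(x) − V^C(x)` equals
`Σ_{L ⊆ I : L∩A ≠ ∅, L∩B ≠ ∅, L∩C = ∅} d_L(x)`. -/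
theorem dAB_moebius_decomposition [Nonempty ι]
    (H : Measure (ι → ℝ)) [IsFiniteMeasure H]
    (hpos : ∀ᵐ ω ∂H, ∀ i, 0 ≤ ω i)
    (hint : ∀ i, Integrable (fun ω => ω i) H)
    (x : ι → ℝ) (hx : ∀ i, 0 < x i)
    (A B : Finset ι) (hA : A.Nonempty) (hB : B.Nonempty) (hAB : Disjoint A B) :
    Vexp H x (A ∪ (A ∪ B)ᶜ) + Vexp H x (B ∪ (A ∪ B)ᶜ)
        - Vexp H x Finset.univ - Vexp H x ((A ∪ B)ᶜ)
      = ∑ L ∈ Finset.univ.powerset.filter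
          (fun L => (L ∩ A).Nonempty ∧ (L ∩ B).Nonempty ∧ L ∩ (A ∪ B)ᶜ = ∅),
          dA H x L := by
  classical
  set C := (A ∪ B)ᶜ with hC
  have hVempty : Vexp H x ∅ = 0 := by simp [Vexp, fmax]
  have hV : ∀ D : Finset ι, Vexp H x D
      = ∑ L ∈ Finset.univ.powerset.filter (fun L => (L ∩ D).Nonempty), dA H x L := by
    intro D
    by_cases hD : D.Nonempty
    · simp only [dA]
      exact (inv_lemma (Vexp H x) D hD).symm
    · rw [Finset.not_nonempty_iff_eq_empty] at hD
      subst hD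
      rw [hVempty]
      have hfil : Finset.univ.powerset.filter
          (fun L => (L ∩ (∅ : Finset ι)).Nonempty) = ∅ := by
        apply Finset.filter_false_of_mem
        intro L _
        simp
      rw [hfil, Finset.sum_empty]
  rw [hV (A ∪ C), hV (B ∪ C), hV Finset.univ, hV C]
  simp only [Finset.sum_filter]
  rw [← Finset.sum_add_distrib, ← Finset.sum_sub_distrib, ← Finset.sum_sub_distrib]
  refine Finset.sum_congr rfl fun L hL => ?_
  have hdist1 : L ∩ (A ∪ C) = L ∩ A ∪ L ∩ C := Finset.inter_union_distrib_left _ _ _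
  have hdist2 : L ∩ (B ∪ C) = L ∩ B ∪ L ∩ C := Finset.inter_union_distrib_left _ _ _
  have hLu : L ∩ Finset.univ = (L ∩ A ∪ L ∩ B) ∪ L ∩ C := by
    rw [← Finset.inter_union_distrib_left, ← Finset.inter_union_distrib_left, hC,
      Finset.union_compl]
  rw [hdist1, hdist2, hLu]
  simp only [union_nonempty', ← Finset.not_nonempty_iff_eq_empty]
  by_cases h1 : (L ∩ A).Nonempty <;> by_cases h2 : (L ∩ B).Nonempty <;>
    by_cases h3 : (L ∩ C).Nonempty <;>
    · simp only [h1, h2, h3, true_or, or_true, false_or, or_false, not_true, not_false_iff,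
        true_and, and_true, false_and, and_false, if_true, if_false, not_false_eq_true]
      ring
end
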